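/- arXiv:2109.14793 — 7 statements merged into one kernel-verified Lean document; each statement's English description precedes it below -/
import Mathlib

section
/- For every integer m ≥ 20, there do not exist integers ℓ₁, ℓ₂, ℓ₃, ℓ₄ such that p_m(ℓ₁) + 2·p_m(ℓ₂) + 4·p_m(ℓ₃) + 8·p_m(ℓ₄) = 16. -/
/-- The generalized `m`-gonal number `p_m(ℓ) = ((m-2)ℓ² - (m-4)ℓ)/2`. -/
def polygonal (m ℓ : ℤ) : ℤ := ((m - 2) * ℓ ^ 2 - (m - 4) * ℓ) / 2

lemma two_mul_polygonal (m ℓ : ℤ) : 2 * polygonal m ℓ = (m - 2) * ℓ ^ 2 - (m - 4) * ℓ := by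
  have hdvd : (2 : ℤ) ∣ ((m - 2) * ℓ ^ 2 - (m - 4) * ℓ) := by
    have h1 : (m - 2) * ℓ ^ 2 - (m - 4) * ℓ = (m - 2) * ((ℓ - 1) * ((ℓ - 1) + 1)) + 2 * ℓ := by
      ring
    rw [h1]
    exact dvd_add (Dvd.dvd.mul_left (Int.even_mul_succ_self (ℓ - 1)).two_dvd _) ⟨ℓ, rfl⟩
  exact Int.mul_ediv_cancel' hdvd

lemma polygonal_cases (m ℓ : ℤ) (hm : 20 ≤ m) :
    polygonal m ℓ = 0 ∨ polygonal m ℓ = 1 ∨ 17 ≤ polygonal m ℓ := by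
  have h2 := two_mul_polygonal m ℓ
  rcases eq_or_ne ℓ 0 with h0 | h0
  · left; subst h0; omega
  rcases eq_or_ne ℓ 1 with h1 | h1
  · right; left; subst h1
    have : (m - 2) * 1 ^ 2 - (m - 4) * 1 = 2 := by ring
    omega
  right; right
  have hge : 34 ≤ (m - 2) * ℓ ^ 2 - (m - 4) * ℓ := by
    rcases lt_or_ge ℓ 0 with hneg | hpos
    · have hl : ℓ ≤ -1 := by omega
      nlinarith [mul_nonneg (by linarith : (0:ℤ) ≤ m - 20) (mul_nonneg (by linarith : (0:ℤ) ≤ -ℓ) (by linarith : (0:ℤ) ≤ -ℓ)), sq_nonneg (ℓ + 1), mul_nonneg (by linarith : (0:ℤ) ≤ m - 20) (by linarith : (0:ℤ) ≤ -ℓ)]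
    · have hl : 2 ≤ ℓ := by omega
      nlinarith [sq_nonneg (ℓ - 2), mul_nonneg (by linarith : (0:ℤ) ≤ m - 20) (by nlinarith : (0:ℤ) ≤ ℓ ^ 2 - ℓ)]
  omega

theorem no_rep_sixteen (m : ℤ) (hm : 20 ≤ m) :
    ¬ ∃ ℓ₁ ℓ₂ ℓ₃ ℓ₄ : ℤ,
      polygonal m ℓ₁ + 2 * polygonal m ℓ₂ + 4 * polygonal m ℓ₃ + 8 * polygonal m ℓ₄ = 16 := by
  rintro ⟨a, b, c, d, h⟩
  have ha := polygonal_cases m a hm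
  have hb := polygonal_cases m b hm
  have hc := polygonal_cases m c hm
  have hd := polygonal_cases m d hm
  omega
end

section
/- Let m ≥ 3 be an integer and n a positive integer. The number of quadruples (ℓ₁,ℓ₂,ℓ₃,ℓ₄) ∈ ℤ⁴ with p_m(ℓ₁) + 2·p_m(ℓ₂) + 4·p_m(ℓ₃) + 8·p_m(ℓ₄) = n equals the number of quadruples (x₁,x₂,x₃,x₄) ∈ ℤ⁴ with x₁² + 2x₂² + 4x₃² + 8x₄² = 8(m-2)n + 15(m-4)² and xⱼ ≡ m (mod 2(m-2)) for all j. -/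
theorem card_polygonal_rep_eq_card_square_rep (m : ℤ) (hm : 3 ≤ m) (n : ℤ) (hn : 0 < n) :
    Set.ncard {l : ℤ × ℤ × ℤ × ℤ |
        polygonal m l.1 + 2 * polygonal m l.2.1 + 4 * polygonal m l.2.2.1
          + 8 * polygonal m l.2.2.2 = n}
      = Set.ncard {x : ℤ × ℤ × ℤ × ℤ |
        x.1 ^ 2 + 2 * x.2.1 ^ 2 + 4 * x.2.2.1 ^ 2 + 8 * x.2.2.2 ^ 2
            = 8 * (m - 2) * n + 15 * (m - 4) ^ 2 ∧
          x.1 ≡ m [ZMOD (2 * (m - 2))] ∧ x.2.1 ≡ m [ZMOD (2 * (m - 2))] ∧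
          x.2.2.1 ≡ m [ZMOD (2 * (m - 2))] ∧ x.2.2.2 ≡ m [ZMOD (2 * (m - 2))]} := by
  have hm2 : m - 2 ≠ 0 := by omega
  set f : ℤ → ℤ := fun ℓ => 2 * (m - 2) * ℓ - (m - 4) with hf
  -- 2 * polygonal m ℓ = (m-2)ℓ² - (m-4)ℓ
  have key : ∀ ℓ : ℤ, 2 * polygonal m ℓ = (m - 2) * ℓ ^ 2 - (m - 4) * ℓ := by
    intro ℓ
    have h2 : (2 : ℤ) ∣ (m - 2) * ℓ ^ 2 - (m - 4) * ℓ := by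
      obtain ⟨k, hk⟩ := Int.even_mul_succ_self (ℓ - 1)
      exact ⟨(m - 2) * k + ℓ, by nlinarith [hk]⟩
    exact Int.mul_ediv_cancel' h2
  have sq : ∀ a : ℤ, (f a) ^ 2 = 8 * (m - 2) * polygonal m a + (m - 4) ^ 2 := by
    intro a
    simp only [hf]
    linear_combination (-4 * (m - 2)) * key a
  have hcong : ∀ a : ℤ, f a ≡ m [ZMOD (2 * (m - 2))] := by
    intro a
    rw [Int.modEq_iff_dvd]
    exact ⟨1 - a, by simp only [hf]; ring⟩
  have hinj : Function.Injective f := by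
    intro a b h
    simp only [hf] at h
    have : (2 * (m - 2)) * a = (2 * (m - 2)) * b := by linarith
    exact mul_left_cancel₀ (by omega) this
  set F : ℤ × ℤ × ℤ × ℤ → ℤ × ℤ × ℤ × ℤ :=
    fun l => (f l.1, f l.2.1, f l.2.2.1, f l.2.2.2) with hF
  have hFinj : Function.Injective F := by
    intro a b h
    simp only [hF, Prod.mk.injEq] at h
    obtain ⟨h1, h2, h3, h4⟩ := h
    exact Prod.ext (hinj h1) (Prod.ext (hinj h2) (Prod.ext (hinj h3) (hinj h4)))
  have himg : {x : ℤ × ℤ × ℤ × ℤ |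
        x.1 ^ 2 + 2 * x.2.1 ^ 2 + 4 * x.2.2.1 ^ 2 + 8 * x.2.2.2 ^ 2
            = 8 * (m - 2) * n + 15 * (m - 4) ^ 2 ∧
          x.1 ≡ m [ZMOD (2 * (m - 2))] ∧ x.2.1 ≡ m [ZMOD (2 * (m - 2))] ∧
          x.2.2.1 ≡ m [ZMOD (2 * (m - 2))] ∧ x.2.2.2 ≡ m [ZMOD (2 * (m - 2))]}
      = F '' {l : ℤ × ℤ × ℤ × ℤ |
        polygonal m l.1 + 2 * polygonal m l.2.1 + 4 * polygonal m l.2.2.1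
          + 8 * polygonal m l.2.2.2 = n} := by
    ext ⟨x1, x2, x3, x4⟩
    constructor
    · rintro ⟨heq, hc1, hc2, hc3, hc4⟩
      have inv : ∀ x : ℤ, x ≡ m [ZMOD (2 * (m - 2))] → ∃ a, f a = x := by
        intro x hx
        rw [Int.modEq_iff_dvd] at hx
        obtain ⟨k, hk⟩ := hx
        exact ⟨1 - k, by simp only [hf]; linarith⟩
      obtain ⟨a1, ha1⟩ := inv x1 hc1
      obtain ⟨a2, ha2⟩ := inv x2 hc2
      obtain ⟨a3, ha3⟩ := inv x3 hc3
      obtain ⟨a4, ha4⟩ := inv x4 hc4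
      refine ⟨(a1, a2, a3, a4), ?_, by simp [hF, ha1, ha2, ha3, ha4]⟩
      have hsum : 8 * (m - 2) * (polygonal m a1 + 2 * polygonal m a2
          + 4 * polygonal m a3 + 8 * polygonal m a4) = 8 * (m - 2) * n := by
        have e1 := sq a1; have e2 := sq a2; have e3 := sq a3; have e4 := sq a4
        rw [ha1] at e1; rw [ha2] at e2; rw [ha3] at e3; rw [ha4] at e4
        nlinarith [e1, e2, e3, e4, heq]
      have h8 : (8 : ℤ) * (m - 2) ≠ 0 := by
        intro h; apply hm2; omega
      exact mul_left_cancel₀ h8 hsum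
    · rintro ⟨⟨a1, a2, a3, a4⟩, hmem, hFl⟩
      simp only [hF, Prod.mk.injEq] at hFl
      obtain ⟨h1, h2, h3, h4⟩ := hFl
      simp only [Set.mem_setOf_eq] at hmem ⊢
      refine ⟨?_, ?_, ?_, ?_, ?_⟩
      · rw [← h1, ← h2, ← h3, ← h4, sq a1, sq a2, sq a3, sq a4]
        linear_combination (8 * (m - 2)) * hmem
      · rw [← h1]; exact hcong a1
      · rw [← h2]; exact hcong a2
      · rw [← h3]; exact hcong a3
      · rw [← h4]; exact hcong a4
  rw [himg, Set.ncard_image_of_injective _ hFinj]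
end

section
/- Let a, b ∈ ℤ and c ∈ ℕ with c ≥ 1. If gcd(a,c) does not divide b, then the generalized quadratic Gauss sum G(a,b;c) = Σ_{ℓ mod c} e^{2πi(aℓ² + bℓ)/c} is zero; and if gcd(a,c) divides b, then G(a,b;c) = gcd(a,c) · G(a/gcd(a,c), b/gcd(a,c); c/gcd(a,c)). -/
open Complex

/-- The generalized quadratic Gauss sum `G(a,b;c) = Σ_{ℓ mod c} e^{2πi(aℓ²+bℓ)/c}`. -/
noncomputable def gaussSum' (a b : ℤ) (c : ℕ) : ℂ :=
  ∑ ℓ ∈ Finset.range c, Complex.exp (2 * Real.pi * Complex.I * (a * ℓ ^ 2 + b * ℓ) / c)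

open Finset in
lemma sum_range_mul_aux (f : ℕ → ℂ) (m n : ℕ) :
    ∑ ℓ ∈ range (m * n), f ℓ = ∑ t ∈ range m, ∑ j ∈ range n, f (t * n + j) := by
  induction m with
  | zero => simp
  | succ m ih =>
    rw [Nat.succ_mul, Finset.sum_range_add, ih, Finset.sum_range_succ]

open Finset in
theorem gaussSum_gcd (a b : ℤ) (c : ℕ) (hc : 1 ≤ c) :
    (¬ (Int.gcd a c : ℤ) ∣ b → gaussSum' a b c = 0) ∧
    ((Int.gcd a c : ℤ) ∣ b →
      gaussSum' a b c
        = (Int.gcd a c : ℂ) *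
            gaussSum' (a / (Int.gcd a c : ℤ)) (b / (Int.gcd a c : ℤ)) (c / Int.gcd a c)) := by
  set d : ℕ := Int.gcd a c with hd
  have hcne : (c : ℤ) ≠ 0 := by exact_mod_cast Nat.one_le_iff_ne_zero.mp hc
  have hdpos : 0 < d := Int.gcd_pos_iff.mpr (Or.inr hcne)
  have hdC : (d : ℂ) ≠ 0 := Nat.cast_ne_zero.mpr hdpos.ne'
  have hdcZ : (d : ℤ) ∣ (c : ℤ) := Int.gcd_dvd_right a c
  have hdcN : d ∣ c := Int.natCast_dvd_natCast.mp hdcZ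
  have hdaZ : (d : ℤ) ∣ a := Int.gcd_dvd_left a c
  set c' : ℕ := c / d with hc'
  have hcc : c = d * c' := (Nat.mul_div_cancel' hdcN).symm
  have hc'pos : 0 < c' := Nat.div_pos (Nat.le_of_dvd (by omega) hdcN) hdpos
  have hc'C : (c' : ℂ) ≠ 0 := Nat.cast_ne_zero.mpr hc'pos.ne'
  obtain ⟨a', ha'⟩ := hdaZ
  have ha'div : a / (d : ℤ) = a' := by
    rw [ha']; exact Int.mul_ediv_cancel_left _ (by exact_mod_cast hdpos.ne')
  have hπ : (2 * (Real.pi : ℂ) * Complex.I) ≠ 0 := by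
    simp [Real.pi_ne_zero, Complex.I_ne_zero]
  have hcC : (c : ℂ) = (d : ℂ) * (c' : ℂ) := by exact_mod_cast congrArg (Nat.cast (R := ℂ)) hcc
  have haC : (a : ℂ) = (d : ℂ) * (a' : ℂ) := by exact_mod_cast congrArg (fun z : ℤ => (z : ℂ)) ha'
  -- key exponential identity
  have key : ∀ t j : ℕ,
      Complex.exp (2 * Real.pi * Complex.I * (a * (↑(t * c' + j)) ^ 2 + b * (↑(t * c' + j))) / c)
        = Complex.exp (2 * Real.pi * Complex.I * (a * j ^ 2 + b * j) / c) *
            Complex.exp (2 * Real.pi * Complex.I * (b * t) / d) := by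
    intro t j
    rw [← Complex.exp_add]
    have harg :
        2 * (Real.pi : ℂ) * Complex.I * (a * (↑(t * c' + j)) ^ 2 + b * (↑(t * c' + j))) / c
          = 2 * Real.pi * Complex.I * (a * j ^ 2 + b * j) / c
              + 2 * Real.pi * Complex.I * (b * t) / d
              + ((a' * (t ^ 2 * c' + 2 * t * j) : ℤ) : ℂ) * (2 * Real.pi * Complex.I) := by
      rw [hcC, haC]
      push_cast
      field_simp
      ring
    rw [harg, Complex.exp_add, Complex.exp_int_mul_two_pi_mul_I, mul_one]
  have split : gaussSum' a b c
      = (∑ j ∈ range c', Complex.exp (2 * Real.pi * Complex.I * (a * j ^ 2 + b * j) / c)) *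
          (∑ t ∈ range d, Complex.exp (2 * Real.pi * Complex.I * (b * t) / d)) := by
    rw [gaussSum']
    rw [show (range c) = range (d * c') from by rw [← hcc]]
    rw [sum_range_mul_aux, Finset.sum_mul, Finset.sum_comm]
    refine Finset.sum_congr rfl fun j _ => ?_
    rw [Finset.mul_sum]
    exact Finset.sum_congr rfl fun t _ => key t j
  have hterm : ∀ t : ℕ, Complex.exp (2 * Real.pi * Complex.I * (b * t) / d)
      = (Complex.exp (2 * Real.pi * Complex.I * b / d)) ^ t := by
    intro t
    rw [← Complex.exp_nat_mul]
    congr 1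
    ring
  constructor
  · intro hnd
    have hzne : Complex.exp (2 * Real.pi * Complex.I * b / d) ≠ 1 := by
      intro h1
      obtain ⟨n, hn⟩ := Complex.exp_eq_one_iff.mp h1
      apply hnd
      refine ⟨n, ?_⟩
      have h2 : (b : ℂ) = (d : ℂ) * (n : ℂ) := by
        rw [div_eq_iff hdC] at hn
        apply mul_left_cancel₀ hπ
        linear_combination hn
      exact_mod_cast h2
    have hpow : (Complex.exp (2 * Real.pi * Complex.I * b / d)) ^ d = 1 := by
      rw [← Complex.exp_nat_mul]
      have : (d : ℂ) * (2 * Real.pi * Complex.I * b / d) = (b : ℂ) * (2 * Real.pi * Complex.I) := by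
        field_simp
      rw [this]
      exact_mod_cast Complex.exp_int_mul_two_pi_mul_I b
    rw [split]
    simp only [hterm]
    rw [geom_sum_eq hzne, hpow, sub_self, zero_div, mul_zero]
  · intro hb
    obtain ⟨b', hb'⟩ := hb
    have hb'div : b / (d : ℤ) = b' := by
      rw [hb']; exact Int.mul_ediv_cancel_left _ (by exact_mod_cast hdpos.ne')
    have hbC : (b : ℂ) = (d : ℂ) * (b' : ℂ) := by exact_mod_cast congrArg (fun z : ℤ => (z : ℂ)) hb'
    have htone : ∀ t : ℕ, Complex.exp (2 * Real.pi * Complex.I * (b * t) / d) = 1 := by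
      intro t
      have : 2 * (Real.pi : ℂ) * Complex.I * (b * t) / d
          = ((b' * t : ℤ) : ℂ) * (2 * Real.pi * Complex.I) := by
        rw [hbC]
        push_cast
        field_simp
      rw [this, Complex.exp_int_mul_two_pi_mul_I]
    have hjterm : ∀ j : ℕ,
        Complex.exp (2 * Real.pi * Complex.I * (a * j ^ 2 + b * j) / c)
          = Complex.exp (2 * Real.pi * Complex.I * (a' * j ^ 2 + b' * j) / c') := by
      intro j
      congr 1
      rw [hcC, haC, hbC]
      field_simp
    rw [split]
    simp only [htone, hjterm, Finset.sum_const, Finset.card_range, nsmul_eq_mul, mul_one]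
    rw [ha'div, hb'div, gaussSum']
    ring
end

section
/- Let a be an odd integer, b an even integer, and r an integer with r ≥ 2. Then G(a,b;2^r) = 2^{r/2}(1+i)·(−2^r/a)·ε_a·exp(−2πi·[a]_{2^r}·(b²/4)/2^r), where (−2^r/a) is the Jacobi symbol, ε_a = 1 if a ≡ 1 (mod 4) and ε_a = i if a ≡ 3 (mod 4), and [a]_{2^r} is an inverse of a modulo 2^r. -/
open Complex

variable {N : ℕ} [NeZero N]

lemma sum_range_eq_sum_zmod (f : ZMod N → ℂ) :
    ∑ ℓ ∈ Finset.range N, f (ℓ : ZMod N) = ∑ z : ZMod N, f z := by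
  apply Finset.sum_nbij' (fun (ℓ : ℕ) => ((ℓ : ZMod N))) (fun (z : ZMod N) => z.val)
  · intro a _; exact Finset.mem_univ _
  · intro z _; exact Finset.mem_range.mpr (ZMod.val_lt z)
  · intro a ha; exact ZMod.val_natCast_of_lt (Finset.mem_range.mp ha)
  · intro z _; exact ZMod.natCast_zmod_val z
  · intro a _; rfl

/-- The pure quadratic Gauss sum over `ZMod N`. -/
noncomputable def quadSum (N : ℕ) [NeZero N] (a : ℤ) : ℂ :=
  ∑ z : ZMod N, ZMod.stdAddChar ((a : ZMod N) * z ^ 2)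

lemma gaussSum'_eq (a b : ℤ) :
    gaussSum' a b N = ∑ z : ZMod N, ZMod.stdAddChar ((a : ZMod N) * z ^ 2 + (b : ZMod N) * z) := by
  rw [gaussSum', ← sum_range_eq_sum_zmod]
  refine Finset.sum_congr rfl fun ℓ _ => ?_
  have : ((a : ZMod N) * (ℓ : ZMod N) ^ 2 + (b : ZMod N) * (ℓ : ZMod N))
      = ((a * (ℓ:ℤ) ^ 2 + b * (ℓ:ℤ) : ℤ) : ZMod N) := by push_cast; ring
  rw [this, ZMod.stdAddChar_coe]
  push_cast
  ring_nf

lemma complete_square (a b x : ℤ) (hx : (a : ZMod N) * (x : ZMod N) = 1) (b' : ℤ)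
    (hb : b = 2 * b') :
    gaussSum' a b N = ZMod.stdAddChar ((-(x * b' ^ 2) : ℤ) : ZMod N) * quadSum N a := by
  rw [gaussSum'_eq]
  rw [quadSum, Finset.mul_sum]
  rw [← Equiv.sum_comp (Equiv.addRight (-((x : ZMod N) * (b' : ZMod N))))
    (fun z => ZMod.stdAddChar ((a : ZMod N) * z ^ 2 + (b : ZMod N) * z))]
  refine Finset.sum_congr rfl fun z _ => ?_
  rw [← AddChar.map_add_eq_mul]
  congr 1
  show (a : ZMod N) * (z + -((x:ZMod N) * (b':ZMod N))) ^ 2 + (b : ZMod N) * (z + -((x:ZMod N)*(b':ZMod N)))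
      = ((-(x * b' ^ 2) : ℤ) : ZMod N) + (a : ZMod N) * z ^ 2
  have hb2 : (b : ZMod N) = 2 * (b' : ZMod N) := by rw [hb]; push_cast; ring
  rw [hb2]
  push_cast
  linear_combination (- 2 * (b':ZMod N) * z + (x:ZMod N) * (b':ZMod N)^2) * hx

/-- `E c m = exp(2πi m/c)`. -/
noncomputable def E (c : ℕ) (m : ℤ) : ℂ := Complex.exp (2 * Real.pi * Complex.I * m / c)

lemma E_eq_stdAddChar (c : ℕ) [NeZero c] (m : ℤ) :
    E c m = ZMod.stdAddChar ((m : ℤ) : ZMod c) := by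
  rw [ZMod.stdAddChar_coe, E]

lemma E_congr {c : ℕ} [NeZero c] {m n : ℤ} (h : m ≡ n [ZMOD (c : ℕ)]) : E c m = E c n := by
  rw [E_eq_stdAddChar, E_eq_stdAddChar]
  congr 1
  rwa [ZMod.intCast_eq_intCast_iff]

lemma E_add (c : ℕ) (m n : ℤ) : E c (m + n) = E c m * E c n := by
  rw [E, E, E, ← Complex.exp_add]
  congr 1
  push_cast
  ring

lemma E_zero (c : ℕ) : E c 0 = 1 := by simp [E]

lemma E_mul_num (c d : ℕ) (hd : d ≠ 0) (m : ℤ) : E (d * c) (d * m) = E c m := by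
  rw [E, E]
  congr 1
  have hd' : (d : ℂ) ≠ 0 := Nat.cast_ne_zero.mpr hd
  rcases eq_or_ne c 0 with rfl | hc
  · simp
  · have hc' : (c : ℂ) ≠ 0 := Nat.cast_ne_zero.mpr hc
    push_cast
    field_simp

/-- The pure quadratic Gauss sum as a `range` sum. -/
noncomputable def Q (c : ℕ) (a : ℤ) : ℂ := ∑ ℓ ∈ Finset.range c, E c (a * (ℓ : ℤ) ^ 2)

lemma quadSum_eq_Q (a : ℤ) : quadSum N a = Q N a := by
  rw [quadSum, Q, ← sum_range_eq_sum_zmod (fun z => ZMod.stdAddChar ((a : ZMod N) * z ^ 2))]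
  refine Finset.sum_congr rfl fun ℓ _ => ?_
  rw [E_eq_stdAddChar]
  congr 1
  push_cast
  ring

lemma sum_range_add' (m n : ℕ) (f : ℕ → ℂ) :
    ∑ i ∈ Finset.range (m + n), f i
      = ∑ i ∈ Finset.range m, f i + ∑ i ∈ Finset.range n, f (m + i) := by
  rw [← Finset.sum_range_add_sum_Ico f (Nat.le_add_right m n), Finset.sum_Ico_eq_sum_range]
  simp

lemma sum_range_even_odd (n : ℕ) (f : ℕ → ℂ) :
    ∑ i ∈ Finset.range (2 * n), f i
      = ∑ i ∈ Finset.range n, f (2 * i) + ∑ i ∈ Finset.range n, f (2 * i + 1) := by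
  induction n with
  | zero => simp
  | succ n ih =>
      have h2 : 2 * (n + 1) = (2 * n) + 1 + 1 := by ring
      rw [h2, Finset.sum_range_succ, Finset.sum_range_succ, Finset.sum_range_succ,
        Finset.sum_range_succ, ih]
      ring

lemma E_neg_one_pow (d : ℕ) (hd : d ≠ 0) (a : ℤ) (ha : Odd a) :
    E (8 * d) (4 * (d : ℤ) * a) = -1 := by
  obtain ⟨k, hk⟩ := ha
  have hd' : (d : ℂ) ≠ 0 := Nat.cast_ne_zero.mpr hd
  rw [E]
  have : 2 * (Real.pi : ℂ) * Complex.I * ((4 * (d:ℤ) * a : ℤ) : ℂ) / ((8 * d : ℕ) : ℂ)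
      = (k : ℂ) * (2 * Real.pi * Complex.I) + Real.pi * Complex.I := by
    push_cast [hk]
    field_simp
    ring
  rw [this, Complex.exp_add, Complex.exp_int_mul_two_pi_mul_I, Complex.exp_pi_mul_I]
  ring

lemma even_part (a : ℤ) (c : ℕ) (hc : c ≠ 0) :
    ∑ i ∈ Finset.range (2 * c), E (2*(2*c)) (a * ((2 * i : ℕ) : ℤ)^2) = 2 * Q c a := by
  haveI : NeZero c := ⟨hc⟩
  have h1 : ∀ i : ℕ, E (2*(2*c)) (a * ((2*i : ℕ):ℤ)^2) = E c (a * (i:ℤ)^2) := by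
    intro i
    have he : (a * ((2*i :ℕ):ℤ)^2) = 4 * (a * (i:ℤ)^2) := by push_cast; ring
    have h2 : 2*(2*c) = 4 * c := by ring
    rw [he, h2]
    exact E_mul_num c 4 (by norm_num) _
  simp_rw [h1]
  rw [two_mul c, sum_range_add']
  have h3 : ∀ i ∈ Finset.range c, E c (a * ((c + i : ℕ):ℤ)^2) = E c (a * (i:ℤ)^2) :=
    fun i _ => E_congr (Int.modEq_iff_dvd.mpr ⟨-(a * (2*i+c)), by push_cast; ring⟩)
  rw [Finset.sum_congr rfl h3, Q, two_mul]

lemma odd_part (a : ℤ) (ha : Odd a) (d : ℕ) (hd : d ≠ 0) (hd2 : Even d) :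
    ∑ i ∈ Finset.range (4*d), E (8*d) (a * (2*(i:ℤ)+1)^2) = 0 := by
  haveI : NeZero (8*d) := ⟨by omega⟩
  have h4 : 4*d = 2*d + 2*d := by ring
  rw [h4, sum_range_add']
  have h3 : ∀ i ∈ Finset.range (2*d), E (8*d) (a * (2*((2*d + i : ℕ):ℤ)+1)^2)
      = E (8*d) (a * (2*(i:ℤ)+1)^2) :=
    fun i _ => E_congr (Int.modEq_iff_dvd.mpr ⟨-(a * (2*(d:ℤ) + 2*i + 1)), by push_cast; ring⟩)
  rw [Finset.sum_congr rfl h3, ← two_mul]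
  have h5 : 2*d = d + d := by ring
  rw [h5, sum_range_add']
  have h6 : ∀ i ∈ Finset.range d, E (8*d) (a * (2*((d + i : ℕ):ℤ)+1)^2)
      = - E (8*d) (a * (2*(i:ℤ)+1)^2) := by
    intro i _
    have harg : a * (2*((d + i : ℕ):ℤ)+1)^2
        = a * (2*(i:ℤ)+1)^2 + 4 * (d:ℤ) * (a * (2*(i:ℤ)+1+(d:ℤ))) := by push_cast; ring
    have hodd : Odd (a * (2*(i:ℤ)+1+(d:ℤ))) := by
      obtain ⟨k, hk⟩ := ha
      obtain ⟨l, hl⟩ := hd2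
      refine Int.odd_mul.mpr ⟨⟨k, hk⟩, ⟨(i:ℤ) + l, by push_cast [hl]; ring⟩⟩
    rw [harg, E_add, E_neg_one_pow d hd _ hodd]
    ring
  rw [Finset.sum_congr rfl h6, Finset.sum_neg_distrib]
  ring

lemma Q_rec (a : ℤ) (ha : Odd a) (r : ℕ) (hr : 2 ≤ r) :
    Q (2 ^ (r + 2)) a = 2 * Q (2 ^ r) a := by
  obtain ⟨r', rfl⟩ : ∃ r', r = r' + 2 := ⟨r - 2, by omega⟩
  set c : ℕ := 2 ^ (r' + 2) with hc
  set d : ℕ := 2 ^ (r' + 1) with hd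
  have hcd : c = 2 * d := by rw [hc, hd]; ring
  have h4 : (2 : ℕ) ^ (r' + 2 + 2) = 2 * (2 * c) := by rw [hc]; ring
  rw [Q, h4, sum_range_even_odd]
  have hdne : d ≠ 0 := by positivity
  have hdeven : Even d := ⟨2 ^ r', by rw [hd]; ring⟩
  have hodd0 : ∑ i ∈ Finset.range (2 * c), E (2*(2*c)) (a * ((2*i+1 : ℕ):ℤ)^2) = 0 := by
    have h8 : 2*(2*c) = 8*d := by rw [hcd]; ring
    have h2c : 2*c = 4*d := by rw [hcd]; ring
    rw [h8, h2c, ← odd_part a ha d hdne hdeven]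
    refine Finset.sum_congr rfl fun i _ => ?_
    have hcast : ((2*i+1 : ℕ):ℤ) = 2*(i:ℤ)+1 := by push_cast; ring
    rw [hcast]
  calc ∑ i ∈ Finset.range (2*c), E (2*(2*c)) (a * ((2*i : ℕ):ℤ)^2)
        + ∑ i ∈ Finset.range (2*c), E (2*(2*c)) (a * ((2*i+1 : ℕ):ℤ)^2)
      = 2 * Q c a + 0 := by rw [even_part a c (by positivity), hodd0]
    _ = 2 * Q (2^(r'+2)) a := by rw [hc]; ring

lemma E_cos_sin (c : ℕ) (hc : c ≠ 0) (m : ℤ) :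
    E c m = Real.cos (2*Real.pi*m/c) + Real.sin (2*Real.pi*m/c) * Complex.I := by
  rw [E]
  have hc' : (c : ℂ) ≠ 0 := Nat.cast_ne_zero.mpr hc
  have harg : 2 * (Real.pi:ℂ) * Complex.I * m / c = ((2*Real.pi*m/c : ℝ) : ℂ) * Complex.I := by
    push_cast
    field_simp
  rw [harg, Complex.exp_mul_I]
  norm_cast

lemma E_two_one : E 2 1 = -1 := by
  rw [E_cos_sin 2 (by norm_num)]
  have h : 2*Real.pi*((1:ℤ):ℝ)/((2:ℕ):ℝ) = Real.pi := by push_cast; ring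
  rw [h, Real.cos_pi, Real.sin_pi]
  norm_num

lemma E_eight_one : E 8 1 = (Real.sqrt 2 / 2 : ℝ) * (1 + Complex.I) := by
  rw [E_cos_sin 8 (by norm_num)]
  have h : 2*Real.pi*((1:ℤ):ℝ)/((8:ℕ):ℝ) = Real.pi/4 := by push_cast; ring
  rw [h, Real.cos_pi_div_four, Real.sin_pi_div_four]
  push_cast
  ring

lemma E_four_one : E 4 1 = Complex.I := by
  have h1 : E 4 1 = E 8 2 := (E_mul_num 4 2 (by norm_num) 1).symm
  have h2 : (2:ℤ) = 1 + 1 := by norm_num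
  rw [h1, h2, E_add, E_eight_one]
  have hs : (Real.sqrt 2 : ℂ) ^ 2 = 2 := by
    rw [← Complex.ofReal_pow, Real.sq_sqrt (by norm_num : (0:ℝ) ≤ 2)]
    norm_num
  push_cast
  linear_combination (1 + Complex.I)^2/4 * hs + (1/2) * Complex.I_sq

lemma E_mod (c : ℕ) [NeZero c] {m n : ℤ} (h : m % (c:ℤ) = n % (c:ℤ)) : E c m = E c n :=
  E_congr h

lemma Q_four (a : ℤ) : Q 4 a = 2 + 2 * E 4 a := by
  rw [Q, Finset.sum_range_succ, Finset.sum_range_succ, Finset.sum_range_succ,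
    Finset.sum_range_succ, Finset.sum_range_zero]
  norm_num
  rw [E_zero, E_mod 4 (show (a * 4) % 4 = 0 % 4 by omega), E_zero,
    E_mod 4 (show (a * 9) % 4 = a % 4 by omega)]
  ring

lemma Q_eight (a : ℤ) (ha : Odd a) : Q 8 a = 4 * E 8 a := by
  have e4 : E 8 (a * 4) = -1 := by
    have h8 : (8 : ℕ) = 8 * 1 := by norm_num
    have harg : a * 4 = 4 * ((1:ℕ):ℤ) * a := by push_cast; ring
    rw [h8, harg]
    exact E_neg_one_pow 1 one_ne_zero a ha
  rw [Q, Finset.sum_range_succ, Finset.sum_range_succ, Finset.sum_range_succ,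
    Finset.sum_range_succ, Finset.sum_range_succ, Finset.sum_range_succ,
    Finset.sum_range_succ, Finset.sum_range_succ, Finset.sum_range_zero]
  norm_num
  rw [E_zero, E_mod 8 (show (a * 9) % 8 = a % 8 by omega),
    E_mod 8 (show (a * 16) % 8 = 0 % 8 by omega),
    E_mod 8 (show (a * 25) % 8 = a % 8 by omega),
    E_mod 8 (show (a * 36) % 8 = (a*4) % 8 by omega),
    E_mod 8 (show (a * 49) % 8 = a % 8 by omega), E_zero, e4]
  ring

lemma sigma_step (a : ℤ) (ha : Odd a) (r : ℕ) :
    (jacobiSym (-(2^(r+2))) a.natAbs : ℤ) = jacobiSym (-(2^r)) a.natAbs := by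
  have hgcd : Int.gcd 2 a.natAbs = 1 := by
    have h1 : a.natAbs % 2 = 1 := Nat.odd_iff.mp (Int.natAbs_odd.mpr ha)
    have h2 : Nat.gcd 2 a.natAbs = 1 := by rw [Nat.gcd_rec, h1]; rfl
    rw [show ((2:ℤ)) = ((2:ℕ):ℤ) by norm_num, Int.gcd_natCast_natCast]
    exact h2
  have h : (-(2^(r+2)) : ℤ) = (-(2^r)) * 2^2 := by ring
  rw [h, jacobiSym.mul_left, jacobiSym.sq_one' hgcd, mul_one]

lemma natAbs_mod4 (a : ℤ) (ha : Odd a) :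
    (if 0 ≤ a then (1:ℤ) else -1) * (ZMod.χ₄ (a.natAbs : ZMod 4)) = if a % 4 = 1 then 1 else -1 := by
  rw [ZMod.χ₄_nat_eq_if_mod_four]
  rw [Int.odd_iff] at ha
  rcases le_or_gt 0 a with h | h
  · have h4 : a.natAbs % 4 = (a % 4).toNat := by omega
    split <;> split <;> omega
  · have h4 : a.natAbs % 4 = (4 - a % 4).toNat % 4 := by omega
    split <;> split <;> omega

lemma gcd2 (a : ℤ) (ha : Odd a) : Int.gcd 2 a.natAbs = 1 := by
  have h1 : a.natAbs % 2 = 1 := Nat.odd_iff.mp (Int.natAbs_odd.mpr ha)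
  have h2 : Nat.gcd 2 a.natAbs = 1 := by rw [Nat.gcd_rec, h1]; rfl
  rw [show ((2:ℤ)) = ((2:ℕ):ℤ) by norm_num, Int.gcd_natCast_natCast]
  exact h2

lemma sigma_two (a : ℤ) (ha : Odd a) :
    ((if 0 ≤ a then (1:ℤ) else -1) * jacobiSym (-(2^2)) a.natAbs)
      = if a % 4 = 1 then 1 else -1 := by
  have hn : Odd a.natAbs := Int.natAbs_odd.mpr ha
  rw [show (-(2^2) : ℤ) = (-1) * 2^2 by ring, jacobiSym.mul_left,
    jacobiSym.sq_one' (gcd2 a ha), mul_one, jacobiSym.at_neg_one hn]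
  exact natAbs_mod4 a ha

lemma sigma_three (a : ℤ) (ha : Odd a) :
    ((if 0 ≤ a then (1:ℤ) else -1) * jacobiSym (-(2^3)) a.natAbs)
      = if a % 8 = 1 ∨ a % 8 = 3 then 1 else -1 := by
  have hn : Odd a.natAbs := Int.natAbs_odd.mpr ha
  rw [show (-(2^3) : ℤ) = ((-1) * 2^2) * 2 by ring, jacobiSym.mul_left, jacobiSym.mul_left,
    jacobiSym.sq_one' (gcd2 a ha), mul_one, jacobiSym.at_neg_one hn, jacobiSym.at_two hn,
    ZMod.χ₄_nat_eq_if_mod_four, ZMod.χ₈_nat_eq_if_mod_eight]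
  rw [Int.odd_iff] at ha
  rcases le_or_gt 0 a with h | h
  · have h8 : a.natAbs % 8 = (a % 8).toNat := by omega
    have h4 : a.natAbs % 4 = a.natAbs % 8 % 4 := by omega
    split <;> split <;> split <;> omega
  · have h8 : a.natAbs % 8 = (8 - a % 8).toNat % 8 := by omega
    have h4 : a.natAbs % 4 = a.natAbs % 8 % 4 := by omega
    split <;> split <;> split <;> omega

lemma E_four_odd (a : ℤ) (ha : Odd a) :
    E 4 a = if a % 4 = 1 then Complex.I else -Complex.I := by
  rw [Int.odd_iff] at ha
  rcases (by omega : a % 4 = 1 ∨ a % 4 = 3) with h | h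
  · rw [E_mod 4 (show a % 4 = 1 % 4 by omega), E_four_one, if_pos h]
  · rw [E_mod 4 (show a % 4 = 3 % 4 by omega), if_neg (by omega)]
    have h31 : (3:ℤ) = 2 + 1 := by norm_num
    have h2 : E 4 2 = -1 := by
      rw [show (4:ℕ) = 2*2 by norm_num, show (2:ℤ) = ((2:ℕ):ℤ)*1 by norm_num,
        E_mul_num 2 2 (by norm_num), E_two_one]
    rw [h31, E_add, h2, E_four_one]
    ring

lemma E_eight_two : E 8 2 = Complex.I := by
  rw [show (8:ℕ) = 2*4 by norm_num, show (2:ℤ) = ((2:ℕ):ℤ)*1 by norm_num,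
    E_mul_num 4 2 (by norm_num), E_four_one]

lemma E_eight_four : E 8 4 = -1 := by
  rw [show (8:ℕ) = 4*2 by norm_num, show (4:ℤ) = ((4:ℕ):ℤ)*1 by norm_num,
    E_mul_num 2 4 (by norm_num), E_two_one]

lemma E_eight_odd (a : ℤ) (ha : Odd a) :
    E 8 a = (if a % 8 = 1 ∨ a % 8 = 3 then 1 else -1)
        * (if a % 4 = 1 then 1 else Complex.I) * ((Real.sqrt 2 / 2 : ℝ) * (1 + Complex.I)) := by
  rw [Int.odd_iff] at ha
  have h48 : a % 4 = a % 8 % 4 := by omega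
  rcases (by omega : a % 8 = 1 ∨ a % 8 = 3 ∨ a % 8 = 5 ∨ a % 8 = 7) with h | h | h | h
  · rw [E_mod 8 (show a % 8 = 1 % 8 by omega), E_eight_one]
    rw [if_pos (by omega : a % 8 = 1 ∨ a % 8 = 3), if_pos (by omega)]
    ring
  · rw [if_pos (by omega : a % 8 = 1 ∨ a % 8 = 3), if_neg (by omega)]
    rw [E_mod 8 (show a % 8 = 3 % 8 by omega), show (3:ℤ) = 2 + 1 by norm_num,
      E_add, E_eight_two, E_eight_one]
    ring
  · rw [if_neg (show ¬(a % 8 = 1 ∨ a % 8 = 3) by omega), if_pos (by omega : a % 4 = 1)]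
    rw [E_mod 8 (show a % 8 = 5 % 8 by omega), show (5:ℤ) = 4 + 1 by norm_num,
      E_add, E_eight_four, E_eight_one]
    ring
  · rw [if_neg (show ¬(a % 8 = 1 ∨ a % 8 = 3) by omega), if_neg (show ¬(a % 4 = 1) by omega)]
    rw [E_mod 8 (show a % 8 = 7 % 8 by omega), show (7:ℤ) = 4 + (2 + 1) by norm_num,
      E_add, E_add, E_eight_four, E_eight_two, E_eight_one]
    ring

lemma cpow_step (r : ℕ) :
    (2:ℂ) ^ ((((r+2:ℕ)):ℂ)/2) = 2 * (2:ℂ) ^ (((r:ℕ):ℂ)/2) := by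
  have h : (((r+2:ℕ)):ℂ)/2 = ((r:ℕ):ℂ)/2 + 1 := by push_cast; ring
  rw [h, Complex.cpow_add _ _ two_ne_zero, Complex.cpow_one]
  ring

lemma cpow_two' : (2:ℂ) ^ ((((2:ℕ)):ℂ)/2) = 2 := by
  rw [show (((2:ℕ)):ℂ)/2 = (1:ℂ) by norm_num, Complex.cpow_one]

lemma cpow_three' : (2:ℂ) ^ ((((3:ℕ)):ℂ)/2) = 2 * (Real.sqrt 2 : ℝ) := by
  have h : (((3:ℕ)):ℂ)/2 = (1:ℂ) + ((1/2 : ℝ):ℂ) := by push_cast; ring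
  rw [h, Complex.cpow_add _ _ two_ne_zero, Complex.cpow_one]
  congr 1
  rw [show (2:ℂ) = ((2:ℝ):ℂ) by norm_num, ← Complex.ofReal_cpow (by norm_num) (1/2)]
  norm_cast
  rw [Real.sqrt_eq_rpow]

lemma Q_eval (a : ℤ) (ha : Odd a) : ∀ r : ℕ, 2 ≤ r →
    Q (2^r) a = ((2:ℂ) ^ (((r:ℕ):ℂ)/2)) * (1 + Complex.I)
      * (((if 0 ≤ a then (1:ℤ) else -1) * jacobiSym (-(2^r)) a.natAbs : ℤ) : ℂ)
      * (if a % 4 = 1 then (1:ℂ) else Complex.I) := by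
  intro r
  induction r using Nat.strong_induction_on with
  | _ r ih =>
    match r with
    | 0 => intro h; omega
    | 1 => intro h; omega
    | 2 =>
      intro _
      rw [show ((2:ℕ)^2) = 4 by norm_num, Q_four, cpow_two', sigma_two a ha, E_four_odd a ha]
      by_cases h : a % 4 = 1
      · simp only [if_pos h]
        push_cast
        ring
      · simp only [if_neg h]
        push_cast
        linear_combination 2 * Complex.I_sq
    | 3 =>
      intro _
      rw [show ((2:ℕ)^3) = 8 by norm_num, Q_eight a ha, cpow_three', sigma_three a ha,
        E_eight_odd a ha]
      by_cases h1 : a % 8 = 1 ∨ a % 8 = 3 <;> by_cases h2 : a % 4 = 1 <;>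
        simp only [if_pos, if_neg, h1, h2] <;> push_cast <;> ring
    | (r'+4) =>
      intro _
      have e : r' + 4 = (r'+2) + 2 := by omega
      rw [e, Q_rec a ha (r'+2) (by omega), ih (r'+2) (by omega) (by omega),
        cpow_step (r'+2), sigma_step a ha (r'+2)]
      ring

theorem gaussSum_two_power (a b : ℤ) (r : ℕ) (hr : 2 ≤ r) (ha : Odd a) (hb : Even b)
    (x : ℤ) (hx : a * x ≡ 1 [ZMOD (2 ^ r : ℕ)]) :
    gaussSum' a b (2 ^ r)
      = ((2 : ℂ) ^ ((r : ℂ) / 2)) * (1 + Complex.I) * ((if 0 ≤ a then (1 : ℤ) else -1) * jacobiSym (-(2 ^ r)) a.natAbs : ℤ) *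
          (if a % 4 = 1 then 1 else Complex.I) *
          Complex.exp (-(2 * Real.pi * Complex.I * x * (b ^ 2 / 4) / (2 ^ r : ℕ))) := by
  haveI : NeZero ((2:ℕ)^r) := ⟨by positivity⟩
  obtain ⟨b', hb'⟩ := hb
  have hb2 : b = 2 * b' := by omega
  have hx' : ((a : ZMod (2^r)) * (x : ZMod (2^r)) = 1) := by
    have h := (ZMod.intCast_eq_intCast_iff _ _ _).mpr hx
    push_cast at h
    exact h
  rw [complete_square a b x hx' b' hb2, quadSum_eq_Q, Q_eval a ha r hr, ← E_eq_stdAddChar]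
  have hexp : E (2^r) (-(x*b'^2))
      = Complex.exp (-(2 * Real.pi * Complex.I * x * ((b:ℂ)^2/4) / (((2:ℕ)^r : ℕ):ℂ))) := by
    rw [E]
    congr 1
    have hbc : (b:ℂ) = 2 * (b':ℂ) := by rw [hb2]; push_cast; ring
    rw [hbc]
    push_cast
    ring
  rw [hexp]
  ring
end

section
/- Let f: ℍ → ℂ be a function on the upper half-plane of the form f(τ) = Σ_{n≥0} c(n) e^{2πinτ} (absolutely convergent), and let M₁, M₂ be positive integers, m an integer, d := gcd(M₁,M₂), μⱼ := Mⱼ/d. If d divides m, then applying the V-operator V_{M₁} (which sends f(τ) to f(M₁τ)) followed by sieving S_{M₂,m} (which restricts the Fourier expansion to indices congruent to m mod M₂) equals first sieving by S_{μ₂, μ̄₁·(m/d)} and then applying V_{M₁}, where μ̄₁ is an inverse of μ₁ modulo μ₂; if d does not divide m, then f|V_{M₁}|S_{M₂,m} = 0. -/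
/-- The sieving operator on coefficient sequences: keep coefficients whose index is
congruent to `m` modulo `M`. -/
def sieve (M : ℕ) (m : ℤ) (c : ℕ → ℂ) : ℕ → ℂ :=
  fun n => if (n : ℤ) ≡ m [ZMOD M] then c n else 0

/-- The `V`-operator on coefficient sequences: `(c|V_δ)(n) = c(n/δ)` if `δ ∣ n`, else `0`. -/
def Vop (δ : ℕ) (c : ℕ → ℂ) : ℕ → ℂ :=
  fun n => if δ ∣ n then c (n / δ) else 0

theorem V_sieve_commute (M₁ M₂ : ℕ) (hM₁ : 0 < M₁) (hM₂ : 0 < M₂) (m : ℤ)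
    (u : ℤ) (hu : ((M₁ / Nat.gcd M₁ M₂ : ℕ) : ℤ) * u ≡ 1 [ZMOD (M₂ / Nat.gcd M₁ M₂ : ℕ)])
    (c : ℕ → ℂ) :
    sieve M₂ m (Vop M₁ c)
      = if ((Nat.gcd M₁ M₂ : ℤ)) ∣ m then
          Vop M₁ (sieve (M₂ / Nat.gcd M₁ M₂) (u * (m / (Nat.gcd M₁ M₂ : ℤ))) c)
        else 0 := by
  set d : ℕ := Nat.gcd M₁ M₂ with hd
  have hd0 : 0 < d := Nat.gcd_pos_of_pos_left _ hM₁
  have hdM₁ : d ∣ M₁ := Nat.gcd_dvd_left _ _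
  have hdM₂ : d ∣ M₂ := Nat.gcd_dvd_right _ _
  have hM₁eq : (M₁ : ℤ) = (d : ℤ) * ((M₁ / d : ℕ) : ℤ) := by
    rw [← Nat.cast_mul, Nat.mul_div_cancel' hdM₁]
  have hM₂eq : (M₂ : ℤ) = (d : ℤ) * ((M₂ / d : ℕ) : ℤ) := by
    rw [← Nat.cast_mul, Nat.mul_div_cancel' hdM₂]
  have hdz : (d : ℤ) ≠ 0 := by exact_mod_cast hd0.ne'
  funext n
  by_cases hdvd : (d : ℤ) ∣ m
  · rw [if_pos hdvd]
    simp only [sieve, Vop]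
    by_cases hM₁n : M₁ ∣ n
    · obtain ⟨k, hk⟩ := hM₁n
      have hm : m = (d : ℤ) * (m / d) := (Int.mul_ediv_cancel' hdvd).symm
      have hn : (n : ℤ) = (d : ℤ) * (((M₁ / d : ℕ) : ℤ) * k) := by
        have h0 : (n : ℤ) = (M₁ : ℤ) * k := by exact_mod_cast hk
        rw [h0, hM₁eq]; ring
      have hcond : ((n : ℤ) ≡ m [ZMOD M₂]) ↔
          ((k : ℤ) ≡ u * (m / d) [ZMOD (M₂ / d : ℕ)]) := by
        have h1 : ((n : ℤ) ≡ m [ZMOD M₂]) ↔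
            (((M₁ / d : ℕ) : ℤ) * k ≡ m / d [ZMOD (M₂ / d : ℕ)]) := by
          constructor <;> intro h
          · have h' : ((M₂ : ℤ)) ∣ m - n := Int.ModEq.dvd h
            rw [hM₂eq] at h'
            have : ((d : ℤ)) * ((M₂ / d : ℕ) : ℤ) ∣ (d : ℤ) * (m / d - ((M₁ / d : ℕ) : ℤ) * k) := by
              rw [mul_sub, ← hm, ← hn]; exact h'
            exact (Int.modEq_iff_dvd).2 ((mul_dvd_mul_iff_left hdz).1 this)
          · have h' : (((M₂ / d : ℕ) : ℤ)) ∣ m / d - ((M₁ / d : ℕ) : ℤ) * k := Int.ModEq.dvd h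
            have : ((M₂ : ℤ)) ∣ m - n := by
              rw [hM₂eq]
              rw [hn, hm]
              rw [← mul_sub]
              exact mul_dvd_mul_left _ h'
            exact (Int.modEq_iff_dvd).2 this
        rw [h1]
        constructor <;> intro h
        · calc (k : ℤ) = 1 * k := (one_mul _).symm
            _ ≡ (((M₁ / d : ℕ) : ℤ) * u) * k [ZMOD (M₂ / d : ℕ)] := (hu.mul_right k).symm
            _ = u * (((M₁ / d : ℕ) : ℤ) * k) := by ring
            _ ≡ u * (m / d) [ZMOD (M₂ / d : ℕ)] := h.mul_left u
        · calc (((M₁ / d : ℕ) : ℤ) * k : ℤ) ≡ ((M₁ / d : ℕ) : ℤ) * (u * (m / d)) [ZMOD (M₂ / d : ℕ)] :=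
              h.mul_left _
            _ = (((M₁ / d : ℕ) : ℤ) * u) * (m / d) := by ring
            _ ≡ 1 * (m / d) [ZMOD (M₂ / d : ℕ)] := hu.mul_right _
            _ = m / d := one_mul _
      have hMn : M₁ ∣ n := ⟨k, hk⟩
      have hnk : n / M₁ = k := by rw [hk, Nat.mul_div_cancel_left _ hM₁]
      rw [if_pos hMn, hnk]
      by_cases hc : (k : ℤ) ≡ u * (m / d) [ZMOD (M₂ / d : ℕ)]
      · rw [if_pos (hcond.2 hc), if_pos hc, if_pos hMn]
      · rw [if_neg (fun h => hc (hcond.1 h)), if_neg hc]; simp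
    · rw [if_neg hM₁n]
      split <;> rfl
  · rw [if_neg hdvd]
    simp only [sieve, Vop, Pi.zero_apply]
    by_cases h1 : (n : ℤ) ≡ m [ZMOD M₂]
    · rw [if_pos h1]
      by_cases h2 : M₁ ∣ n
      · exfalso
        apply hdvd
        have hdn : (d : ℤ) ∣ (n : ℤ) := Int.natCast_dvd_natCast.2 (hdM₁.trans h2)
        have hnm : (d : ℤ) ∣ m - n := (Int.natCast_dvd_natCast.2 hdM₂).trans h1.dvd
        have := dvd_add hnm hdn
        simpa using this
      · rw [if_neg h2]
    · rw [if_neg h1]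
end

section
/- Let n be a positive integer divisible by 80, and write n = 2^a·5^b·c with gcd(10,c) = 1 (so a ≥ 4, b ≥ 1). Then σ(n/16) − σ(n/32) − σ(n/80) + σ(n/160) + 8σ(n/256) − 32σ(n/512) − 8σ(n/1280) + 32σ(n/2560) = 5^b·σ(c)·2^{a−4} if 4 ≤ a ≤ 7, and = 5^b·σ(c)·24 if a ≥ 8, where σ(x) denotes the sum of divisors of x when x is a positive integer and σ(x) := 0 when x is not an integer. -/
/-- The sum-of-divisors function. -/
def sigma1 (n : ℕ) : ℕ := ∑ d ∈ n.divisors, d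

/-- `σ(n/k)`, extended by `0` when `k` does not divide `n`. -/
def sigmaDiv (n k : ℕ) : ℤ := if k ∣ n then (sigma1 (n / k) : ℤ) else 0

lemma sigma1_mul {m n : ℕ} (h : Nat.Coprime m n) :
    sigma1 (m * n) = sigma1 m * sigma1 n := h.sum_divisors_mul

lemma sigma1_prime_pow {p : ℕ} (hp : p.Prime) (x : ℕ) :
    sigma1 (p ^ x) = ∑ i ∈ Finset.range (x + 1), p ^ i :=
  Nat.sum_divisors_prime_pow hp

lemma sig2 (x : ℕ) : sigma1 (2 ^ x) + 1 = 2 ^ (x + 1) := by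
  induction x with
  | zero => rfl
  | succ k ih =>
    rw [sigma1_prime_pow Nat.prime_two] at ih ⊢
    rw [Finset.sum_range_succ]
    rw [pow_succ 2 (k+1)]
    omega

lemma sig5 (x : ℕ) : 4 * sigma1 (5 ^ x) + 1 = 5 ^ (x + 1) := by
  induction x with
  | zero => rfl
  | succ k ih =>
    rw [sigma1_prime_pow (by norm_num : Nat.Prime 5)] at ih ⊢
    rw [Finset.sum_range_succ]
    have : (5:ℕ) ^ (k + 1 + 1) = 5 * 5 ^ (k+1) := (pow_succ' 5 (k+1))
    omega

lemma sig2Z (x : ℕ) : (sigma1 (2 ^ x) : ℤ) = 2 ^ (x + 1) - 1 := by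
  have h := sig2 x; zify at h; linarith

lemma sig5Z (x : ℕ) : 4 * (sigma1 (5 ^ x) : ℤ) = 5 ^ (x + 1) - 1 := by
  have h := sig5 x; zify at h; linarith

lemma sigv : sigma1 1 = 1 ∧ sigma1 2 = 3 ∧ sigma1 4 = 7 ∧ sigma1 8 = 15 ∧
    sigma1 16 = 31 := by
  refine ⟨?_, ?_, ?_, ?_, ?_⟩ <;> decide

lemma cop2 {c : ℕ} (hc : Nat.gcd 10 c = 1) (x y : ℕ) :
    Nat.Coprime (2 ^ x) (5 ^ y * c) := by
  have hc2 : Nat.Coprime 2 c := Nat.Coprime.coprime_dvd_left (by norm_num) hc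
  exact Nat.Coprime.mul_right (Nat.Coprime.pow _ _ (by norm_num))
    (Nat.Coprime.pow_left _ hc2)

lemma key {c : ℕ} (hc : Nat.gcd 10 c = 1) (a b i j : ℕ) (hi : i ≤ a) (hj : j ≤ b) :
    sigmaDiv (2 ^ a * 5 ^ b * c) (2 ^ i * 5 ^ j)
      = (sigma1 (2 ^ (a - i)) : ℤ) * sigma1 (5 ^ (b - j)) * sigma1 c := by
  have hc2 : Nat.Coprime 2 c := Nat.Coprime.coprime_dvd_left (by norm_num) hc
  have hc5 : Nat.Coprime 5 c := Nat.Coprime.coprime_dvd_left (by norm_num) hc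
  have h2a : (2:ℕ) ^ a = 2 ^ i * 2 ^ (a - i) := by rw [← pow_add]; congr 1; omega
  have h5b : (5:ℕ) ^ b = 5 ^ j * 5 ^ (b - j) := by rw [← pow_add]; congr 1; omega
  have hdvd : 2 ^ i * 5 ^ j ∣ 2 ^ a * 5 ^ b * c := by
    rw [h2a, h5b]; exact ⟨2 ^ (a-i) * 5 ^ (b-j) * c, by ring⟩
  have hq : (2 ^ a * 5 ^ b * c) / (2 ^ i * 5 ^ j) = 2 ^ (a - i) * 5 ^ (b - j) * c := by
    rw [h2a, h5b, show 2 ^ i * 2 ^ (a-i) * (5 ^ j * 5 ^ (b-j)) * c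
      = (2 ^ i * 5 ^ j) * (2 ^ (a-i) * 5 ^ (b-j) * c) by ring]
    exact Nat.mul_div_cancel_left _ (by positivity)
  have hcop2 : Nat.Coprime (5 ^ (b-j)) c := Nat.Coprime.pow_left _ hc5
  rw [sigmaDiv, if_pos hdvd, hq, mul_assoc, sigma1_mul (cop2 hc _ _),
    sigma1_mul hcop2]
  push_cast; ring

lemma key0 {c : ℕ} (hc : Nat.gcd 10 c = 1) (a b i j : ℕ) (hi : a < i) :
    sigmaDiv (2 ^ a * 5 ^ b * c) (2 ^ i * 5 ^ j) = 0 := by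
  rw [sigmaDiv, if_neg]
  intro hdvd
  have h2 : (2:ℕ) ^ i ∣ 2 ^ a * (5 ^ b * c) := by
    refine dvd_trans (dvd_mul_right _ (5 ^ j)) ?_
    rwa [← mul_assoc]
  have := (Nat.Coprime.dvd_of_dvd_mul_right (cop2 hc _ _)) h2
  have := (Nat.pow_dvd_pow_iff_le_right (by norm_num : (1:ℕ) < 2)).mp this
  omega

theorem eisenstein_coeff_m12 (n : ℕ) (hn : 0 < n) (h80 : 80 ∣ n)
    (a b c : ℕ) (hc : Nat.gcd 10 c = 1) (hdec : n = 2 ^ a * 5 ^ b * c) :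
    (4 ≤ a ∧ a ≤ 7 →
      sigmaDiv n 16 - sigmaDiv n 32 - sigmaDiv n 80 + sigmaDiv n 160 + 8 * sigmaDiv n 256
          - 32 * sigmaDiv n 512 - 8 * sigmaDiv n 1280 + 32 * sigmaDiv n 2560
        = 5 ^ b * (sigma1 c : ℤ) * 2 ^ (a - 4)) ∧
    (8 ≤ a →
      sigmaDiv n 16 - sigmaDiv n 32 - sigmaDiv n 80 + sigmaDiv n 160 + 8 * sigmaDiv n 256
          - 32 * sigmaDiv n 512 - 8 * sigmaDiv n 1280 + 32 * sigmaDiv n 2560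
        = 5 ^ b * (sigma1 c : ℤ) * 24) := by
  subst hdec
  have hc2 : Nat.Coprime 2 c := Nat.Coprime.coprime_dvd_left (by norm_num) hc
  have hc5 : Nat.Coprime 5 c := Nat.Coprime.coprime_dvd_left (by norm_num) hc
  have ha4 : 4 ≤ a := by
    have h16 : (2:ℕ) ^ 4 ∣ 2 ^ a * (5 ^ b * c) := by
      refine dvd_trans (by norm_num : (2:ℕ)^4 ∣ 80) ?_
      rwa [← mul_assoc]
    have := (Nat.Coprime.dvd_of_dvd_mul_right (cop2 hc 4 b)) h16
    exact (Nat.pow_dvd_pow_iff_le_right (by norm_num : (1:ℕ) < 2)).mp this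
  have hb1 : 1 ≤ b := by
    have h5 : (5:ℕ) ^ 1 ∣ 5 ^ b * (2 ^ a * c) := by
      refine dvd_trans (by norm_num : (5:ℕ)^1 ∣ 80) ?_
      rw [show 5 ^ b * (2 ^ a * c) = 2 ^ a * 5 ^ b * c by ring]
      exact h80
    have hcop : Nat.Coprime (5 ^ 1) (2 ^ a * c) :=
      Nat.Coprime.mul_right (Nat.Coprime.pow _ _ (by norm_num))
        (Nat.Coprime.pow_left _ hc5)
    have := (Nat.Coprime.dvd_of_dvd_mul_right hcop) h5
    exact (Nat.pow_dvd_pow_iff_le_right (by norm_num : (1:ℕ) < 5)).mp this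
  obtain ⟨s, rfl⟩ : ∃ s, b = s + 1 := ⟨b - 1, by omega⟩
  have hstep : (sigma1 (5 ^ (s+1)) : ℤ) = 5 * sigma1 (5 ^ s) + 1 := by
    have h1 := sig5Z s
    have h2 := sig5Z (s+1)
    have h3 : (5:ℤ)^(s+1+1) = 5 * 5^(s+1) := by ring
    linarith
  have h4 : ((5:ℤ))^(s+1) = 4 * (sigma1 (5 ^ s) : ℤ) + 1 := by
    have := sig5Z s; linarith
  have nums : (16:ℕ) = 2^4*5^0 ∧ (32:ℕ) = 2^5*5^0 ∧ (80:ℕ) = 2^4*5^1 ∧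
      (160:ℕ) = 2^5*5^1 ∧ (256:ℕ) = 2^8*5^0 ∧ (512:ℕ) = 2^9*5^0 ∧
      (1280:ℕ) = 2^8*5^1 ∧ (2560:ℕ) = 2^9*5^1 := by norm_num
  obtain ⟨e1, e2, e3, e4, e5, e6, e7, e8⟩ := nums
  constructor
  · rintro ⟨ha, ha7⟩
    rw [e1, e2, e3, e4, e5, e6, e7, e8]
    interval_cases a
    · rw [key hc 4 (s+1) 4 0 (by omega) (by omega), key hc 4 (s+1) 4 1 (by omega) (by omega),
        key0 hc 4 (s+1) 5 0 (by omega), key0 hc 4 (s+1) 5 1 (by omega),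
        key0 hc 4 (s+1) 8 0 (by omega), key0 hc 4 (s+1) 8 1 (by omega),
        key0 hc 4 (s+1) 9 0 (by omega), key0 hc 4 (s+1) 9 1 (by omega)]
      norm_num [hstep, h4, sig2Z, sigv.1, sigv.2.1, sigv.2.2.1, sigv.2.2.2.1, sigv.2.2.2.2]
      ring
    · rw [key hc 5 (s+1) 4 0 (by omega) (by omega), key hc 5 (s+1) 4 1 (by omega) (by omega),
        key hc 5 (s+1) 5 0 (by omega) (by omega), key hc 5 (s+1) 5 1 (by omega) (by omega),
        key0 hc 5 (s+1) 8 0 (by omega), key0 hc 5 (s+1) 8 1 (by omega),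
        key0 hc 5 (s+1) 9 0 (by omega), key0 hc 5 (s+1) 9 1 (by omega)]
      norm_num [hstep, h4, sig2Z, sigv.1, sigv.2.1, sigv.2.2.1, sigv.2.2.2.1, sigv.2.2.2.2]
      ring
    · rw [key hc 6 (s+1) 4 0 (by omega) (by omega), key hc 6 (s+1) 4 1 (by omega) (by omega),
        key hc 6 (s+1) 5 0 (by omega) (by omega), key hc 6 (s+1) 5 1 (by omega) (by omega),
        key0 hc 6 (s+1) 8 0 (by omega), key0 hc 6 (s+1) 8 1 (by omega),
        key0 hc 6 (s+1) 9 0 (by omega), key0 hc 6 (s+1) 9 1 (by omega)]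
      norm_num [hstep, h4, sig2Z, sigv.1, sigv.2.1, sigv.2.2.1, sigv.2.2.2.1, sigv.2.2.2.2]
      ring
    · rw [key hc 7 (s+1) 4 0 (by omega) (by omega), key hc 7 (s+1) 4 1 (by omega) (by omega),
        key hc 7 (s+1) 5 0 (by omega) (by omega), key hc 7 (s+1) 5 1 (by omega) (by omega),
        key0 hc 7 (s+1) 8 0 (by omega), key0 hc 7 (s+1) 8 1 (by omega),
        key0 hc 7 (s+1) 9 0 (by omega), key0 hc 7 (s+1) 9 1 (by omega)]
      norm_num [hstep, h4, sig2Z, sigv.1, sigv.2.1, sigv.2.2.1, sigv.2.2.2.1, sigv.2.2.2.2]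
      ring
  · intro h8
    rw [e1, e2, e3, e4, e5, e6, e7, e8]
    rcases eq_or_lt_of_le h8 with h | h
    · subst h
      rw [key hc 8 (s+1) 4 0 (by omega) (by omega), key hc 8 (s+1) 4 1 (by omega) (by omega),
        key hc 8 (s+1) 5 0 (by omega) (by omega), key hc 8 (s+1) 5 1 (by omega) (by omega),
        key hc 8 (s+1) 8 0 (by omega) (by omega), key hc 8 (s+1) 8 1 (by omega) (by omega),
        key0 hc 8 (s+1) 9 0 (by omega), key0 hc 8 (s+1) 9 1 (by omega)]
      norm_num [hstep, h4, sig2Z, sigv.1, sigv.2.1, sigv.2.2.1, sigv.2.2.2.1, sigv.2.2.2.2]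
      ring
    · obtain ⟨t, rfl⟩ : ∃ t, a = t + 9 := ⟨a - 9, by omega⟩
      rw [key hc (t+9) (s+1) 4 0 (by omega) (by omega), key hc (t+9) (s+1) 4 1 (by omega) (by omega),
        key hc (t+9) (s+1) 5 0 (by omega) (by omega), key hc (t+9) (s+1) 5 1 (by omega) (by omega),
        key hc (t+9) (s+1) 8 0 (by omega) (by omega), key hc (t+9) (s+1) 8 1 (by omega) (by omega),
        key hc (t+9) (s+1) 9 0 (by omega) (by omega), key hc (t+9) (s+1) 9 1 (by omega) (by omega)]
      rw [show t+9-4 = t+5 by omega, show t+9-5 = t+4 by omega,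
        show t+9-8 = t+1 by omega, show t+9-9 = t by omega,
        show s+1-0 = s+1 by omega, show s+1-1 = s by omega]
      rw [hstep, sig2Z (t+5), sig2Z (t+4), sig2Z (t+1), sig2Z t, h4]
      ring
end

section
/- Let h ∈ ℤ, k a positive integer with gcd(h,k) = 1, ℓ ≥ 0, r ∈ ℤ, M a positive integer with gcd(M,r) ∈ {1,2,4}. Write M = 2^μ M₀, r = 2^ϱ r₀, k = 2^κ k₀ with M₀, r₀, k₀ odd, and set g₀ := gcd(M₀,k₀), g₁ := gcd(g₀, k₀/g₀). If g₁ ≠ 1 or ϱ < min(μ, κ − ℓ − μ) − 1, then the Gauss sum G(2^ℓ h M², 2^{ℓ+1} h r M; k) vanishes. -/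
open Complex

private lemma sum_range_shift (s : ℕ) (f : ℕ → ℂ) (c : ℕ) (hf : ∀ n, f (n + c) = f n) :
    ∑ j ∈ Finset.range c, f (j + s) = ∑ j ∈ Finset.range c, f j := by
  induction s generalizing f with
  | zero => simp
  | succ s ih =>
    have h1 : ∀ (g : ℕ → ℂ), (∀ n, g (n + c) = g n) →
        ∑ j ∈ Finset.range c, g (j + 1) = ∑ j ∈ Finset.range c, g j := by
      intro g hg
      cases c with
      | zero => simp
      | succ n =>
        have e1 := Finset.sum_range_succ' g (n + 1)
        have e2 := Finset.sum_range_succ g (n + 1)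
        have e3 : g (n + 1) = g 0 := by simpa using hg 0
        rw [e2] at e1
        linear_combination e3 - e1
    have hg' : ∀ n, f (n + 1 + c) = f (n + 1) := fun n => hf (n + 1)
    have step := ih (fun m => f (m + 1)) (fun n => by
      show f (n + c + 1) = f (n + 1)
      have := hg' n
      rwa [show n + 1 + c = n + c + 1 by omega] at this)
    calc ∑ j ∈ Finset.range c, f (j + (s + 1))
        = ∑ j ∈ Finset.range c, f (j + s + 1) := rfl
      _ = ∑ j ∈ Finset.range c, f (j + 1) := step
      _ = ∑ j ∈ Finset.range c, f j := h1 f hf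

private lemma gaussSum'_eq_zero_of (a b : ℤ) (c : ℕ) (hc : 0 < c) (q : ℕ) (hq : q ∣ c)
    (hqa : (q : ℤ) ∣ a) (hqb : ¬ (q : ℤ) ∣ b) : gaussSum' a b c = 0 := by
  obtain ⟨s, hcs⟩ := hq
  have hs0 : 0 < s := by
    rcases Nat.eq_zero_or_pos s with h | h
    · subst h; simp at hcs; omega
    · exact h
  obtain ⟨a', ha'⟩ := hqa
  have hc0 : (c : ℂ) ≠ 0 := Nat.cast_ne_zero.mpr hc.ne'
  set f : ℕ → ℂ := fun j =>
    Complex.exp (2 * Real.pi * Complex.I * ((a : ℂ) * (j : ℂ) ^ 2 + (b : ℂ) * (j : ℂ)) / c)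
    with hf
  have expand : ∀ (j : ℕ) (X T : ℤ),
      (a : ℂ) * ((j : ℕ) : ℂ) ^ 2 + (b : ℂ) * ((j : ℕ) : ℂ) = (X : ℂ) + (c : ℂ) * (T : ℂ) →
      f j = Complex.exp (2 * Real.pi * Complex.I * (X : ℂ) / c) := by
    intro j X T hXT
    rw [hf]
    simp only []
    rw [hXT, show 2 * (Real.pi : ℂ) * Complex.I * ((X : ℂ) + (c : ℂ) * (T : ℂ)) / c =
      2 * (Real.pi : ℂ) * Complex.I * (X : ℂ) / c + (T : ℂ) * (2 * Real.pi * Complex.I) by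
        field_simp, Complex.exp_add, Complex.exp_int_mul_two_pi_mul_I, mul_one]
  have hcc : (c : ℂ) = (q : ℂ) * (s : ℂ) := by exact_mod_cast congrArg (Nat.cast : ℕ → ℂ) hcs
  have hac : (a : ℂ) = (q : ℂ) * (a' : ℂ) := by exact_mod_cast congrArg (Int.cast : ℤ → ℂ) ha'
  have fval : ∀ j : ℕ, f j =
      Complex.exp (2 * Real.pi * Complex.I * ((a * (j:ℤ)^2 + b * (j:ℤ) : ℤ) : ℂ) / c) := by
    intro j
    refine expand j _ 0 ?_
    push_cast; ring
  have key : ∀ j : ℕ, f (j + s) =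
      Complex.exp (2 * Real.pi * Complex.I * ((b * (s:ℤ) : ℤ) : ℂ) / c) * f j := by
    intro j
    have h1 : f (j + s) = Complex.exp (2 * Real.pi * Complex.I *
        ((a * (j:ℤ)^2 + b * (j:ℤ) + b * (s:ℤ) : ℤ) : ℂ) / c) := by
      refine expand (j + s) _ (a' * (2 * (j:ℤ) + (s:ℤ))) ?_
      push_cast
      rw [hac, hcc]; ring
    rw [h1, fval j, ← Complex.exp_add]
    congr 1
    push_cast
    field_simp
    ring
  have per : ∀ n : ℕ, f (n + c) = f n := by
    intro n
    have h1 : f (n + c) = Complex.exp (2 * Real.pi * Complex.I *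
        ((a * (n:ℤ)^2 + b * (n:ℤ) : ℤ) : ℂ) / c) := by
      refine expand (n + c) _ (2 * a * (n:ℤ) + a * (c:ℤ) + b) ?_
      push_cast; ring
    rw [h1, fval n]
  have shift := sum_range_shift s f c per
  have hGdef : gaussSum' a b c = ∑ j ∈ Finset.range c, f j := rfl
  have h2 : ∑ j ∈ Finset.range c, f (j + s) =
      Complex.exp (2 * Real.pi * Complex.I * ((b * (s:ℤ) : ℤ) : ℂ) / c) *
        ∑ j ∈ Finset.range c, f j := by
    rw [Finset.mul_sum]
    exact Finset.sum_congr rfl fun j _ => key j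
  have hne : Complex.exp (2 * Real.pi * Complex.I * ((b * (s:ℤ) : ℤ) : ℂ) / c) ≠ 1 := by
    intro h1
    rw [Complex.exp_eq_one_iff] at h1
    obtain ⟨n, hn⟩ := h1
    have h2pi : (2 : ℂ) * Real.pi * Complex.I ≠ 0 := by
      simp [Real.pi_ne_zero, Complex.I_ne_zero]
    have hbs : ((b * (s:ℤ) : ℤ) : ℂ) = (n : ℂ) * (c : ℂ) := by
      field_simp at hn
      have h4 : (2 : ℂ) * Real.pi * Complex.I * (↑b * ↑s) =
          (2 : ℂ) * Real.pi * Complex.I * ((n : ℂ) * (c : ℂ)) := by push_cast at hn ⊢; linear_combination (2 * (Real.pi : ℂ) * Complex.I) * hn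
      have := mul_left_cancel₀ h2pi h4
      push_cast
      exact this
    have hdvd : (c : ℤ) ∣ b * (s : ℤ) := ⟨n, by exact_mod_cast hbs.trans (mul_comm _ _)⟩
    apply hqb
    have hcz : (c : ℤ) = (q : ℤ) * (s : ℤ) := by exact_mod_cast congrArg (Nat.cast : ℕ → ℤ) hcs
    rw [hcz] at hdvd
    have hsz : ((s : ℤ)) ≠ 0 := Int.natCast_ne_zero.mpr hs0.ne'
    exact (mul_dvd_mul_iff_right hsz).mp hdvd
  have heq : (Complex.exp (2 * Real.pi * Complex.I * ((b * (s:ℤ) : ℤ) : ℂ) / c) - 1) *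
      gaussSum' a b c = 0 := by
    rw [sub_mul, one_mul, hGdef, ← h2, shift]
    ring
  rcases mul_eq_zero.mp heq with h | h
  · exact absurd (by linear_combination h) hne
  · exact h

theorem gaussSum_theta_vanishing (h : ℤ) (k : ℕ) (hk : 0 < k) (hhk : Int.gcd h k = 1)
    (ℓ : ℕ) (r : ℤ) (M : ℕ) (hM : 0 < M) (hMr : Int.gcd (M : ℤ) r ∈ ({1, 2, 4} : Set ℕ))
    (μ ϱ κ : ℕ) (M₀ k₀ : ℕ) (r₀ : ℤ)
    (hMdec : M = 2 ^ μ * M₀) (hrdec : r = 2 ^ ϱ * r₀) (hkdec : k = 2 ^ κ * k₀)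
    (hM₀ : Odd M₀) (hr₀ : Odd r₀) (hk₀ : Odd k₀)
    (hvanish : Nat.gcd (Nat.gcd M₀ k₀) (k₀ / Nat.gcd M₀ k₀) ≠ 1 ∨
      (ϱ : ℤ) < min (μ : ℤ) ((κ : ℤ) - ℓ - μ) - 1) :
    gaussSum' (2 ^ ℓ * h * M ^ 2) (2 ^ (ℓ + 1) * h * r * M) k = 0 := by
  rcases hvanish with hg | hϱ
  · -- Case 1: g₁ ≠ 1, use an odd prime p ∣ g₁
    set g₀ := Nat.gcd M₀ k₀ with hg₀def
    set p := (Nat.gcd g₀ (k₀ / g₀)).minFac with hpdef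
    have hp : p.Prime := Nat.minFac_prime hg
    have hpg₁ : p ∣ Nat.gcd g₀ (k₀ / g₀) := Nat.minFac_dvd _
    have hpg₀ : p ∣ g₀ := hpg₁.trans (Nat.gcd_dvd_left _ _)
    have hpk' : p ∣ k₀ / g₀ := hpg₁.trans (Nat.gcd_dvd_right _ _)
    have hpM₀ : p ∣ M₀ := hpg₀.trans (Nat.gcd_dvd_left _ _)
    have hpk₀ : p ∣ k₀ := hpg₀.trans (Nat.gcd_dvd_right _ _)
    have hM₀0 : M₀ ≠ 0 := by rcases hM₀ with ⟨t, ht⟩; omega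
    have hk₀0 : k₀ ≠ 0 := by rcases hk₀ with ⟨t, ht⟩; omega
    have hp2 : p ≠ 2 := by
      intro hp2
      rw [hp2] at hpk₀
      rcases hk₀ with ⟨t, ht⟩
      omega
    set α := M₀.factorization p with hαdef
    have hα1 : 1 ≤ α := hp.factorization_pos_of_dvd hM₀0 hpM₀
    have hg₀dvd : g₀ ∣ k₀ := Nat.gcd_dvd_right _ _
    have hg₀0 : g₀ ≠ 0 := Nat.gcd_ne_zero_left hM₀0
    have hβ : α + 1 ≤ k₀.factorization p := by
      have hd0 : k₀ / g₀ ≠ 0 := by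
        rcases hg₀dvd with ⟨t, ht⟩
        rcases Nat.eq_zero_or_pos t with rfl | ht'
        · simp [ht] at hk₀0
        · rw [ht, Nat.mul_div_cancel_left _ (Nat.pos_of_ne_zero hg₀0)]; omega
      have h1 : 1 ≤ (k₀ / g₀).factorization p := hp.factorization_pos_of_dvd hd0 hpk'
      have h2 : (k₀ / g₀).factorization p = k₀.factorization p - g₀.factorization p := by
        rw [Nat.factorization_div hg₀dvd, Finsupp.tsub_apply]
      have h3 : g₀.factorization p = min α (k₀.factorization p) := by
        rw [hg₀def, Nat.factorization_gcd hM₀0 hk₀0, Finsupp.inf_apply]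
      omega
    have hk₀k : k₀ ∣ k := ⟨2 ^ κ, by rw [hkdec]; ring⟩
    have hqk : p ^ (α + 1) ∣ k :=
      ((Nat.Prime.pow_dvd_iff_le_factorization hp hk₀0).mpr hβ).trans hk₀k
    have hpowM₀ : p ^ α ∣ M₀ := Nat.ordProj_dvd M₀ p
    have hqa : ((p : ℤ)) ^ (α + 1) ∣ 2 ^ ℓ * h * (M : ℤ) ^ 2 := by
      have h1 : p ^ (α + 1) ∣ M₀ ^ 2 := by
        calc p ^ (α + 1) ∣ p ^ (2 * α) := pow_dvd_pow p (by omega)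
          _ = (p ^ α) ^ 2 := by rw [← pow_mul, mul_comm]
          _ ∣ M₀ ^ 2 := pow_dvd_pow_of_dvd hpowM₀ 2
      have h2 : M₀ ^ 2 ∣ M ^ 2 := pow_dvd_pow_of_dvd ⟨2 ^ μ, by rw [hMdec]; ring⟩ 2
      have h3 : (p : ℤ) ^ (α + 1) ∣ (M : ℤ) ^ 2 := by exact_mod_cast Int.natCast_dvd_natCast.mpr (h1.trans h2)
      exact h3.mul_left _
    have hpZ : Prime ((p : ℤ)) := Nat.prime_iff_prime_int.mp hp
    have hpk : p ∣ k := (Nat.dvd_gcd hpM₀ hpk₀).trans ((Nat.gcd_dvd_right M₀ k₀).trans hk₀k)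
    have hpnot2pow : ∀ n : ℕ, ¬ (p : ℤ) ∣ 2 ^ n := by
      intro n hdvd
      have : (p : ℤ) ∣ 2 := hpZ.dvd_of_dvd_pow hdvd
      have : p ∣ 2 := by exact_mod_cast this
      exact hp2 ((Nat.prime_dvd_prime_iff_eq hp Nat.prime_two).mp this)
    have hpnh : ¬ (p : ℤ) ∣ h := by
      intro hdvd
      have : (p : ℤ) ∣ (Int.gcd h k : ℤ) := Int.dvd_coe_gcd hdvd (by exact_mod_cast Int.natCast_dvd_natCast.mpr hpk)
      rw [hhk] at this
      have : p ∣ 1 := by exact_mod_cast this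
      simp at this
      exact hp.one_lt.ne' this
    have hpnr : ¬ (p : ℤ) ∣ r := by
      intro hdvd
      have hpM : (p : ℤ) ∣ (M : ℤ) := by
        exact_mod_cast Int.natCast_dvd_natCast.mpr (hpM₀.trans ⟨2 ^ μ, by rw [hMdec]; ring⟩)
      have h1 : (p : ℤ) ∣ (Int.gcd (M : ℤ) r : ℤ) := Int.dvd_coe_gcd hpM hdvd
      have h2 : p ∣ Int.gcd (M : ℤ) r := by exact_mod_cast h1
      rcases hMr with h3 | h3 | h3 <;> rw [h3] at h2
      · simp at h2; exact hp.one_lt.ne' h2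
      · exact hp2 ((Nat.prime_dvd_prime_iff_eq hp Nat.prime_two).mp h2)
      · have : p ∣ 2 := hp.dvd_of_dvd_pow (show p ∣ 2 ^ 2 by norm_num [h2])
        exact hp2 ((Nat.prime_dvd_prime_iff_eq hp Nat.prime_two).mp this)
    have hqb : ¬ ((p : ℤ)) ^ (α + 1) ∣ 2 ^ (ℓ + 1) * h * r * (M : ℤ) := by
      intro hdvd
      set u := M₀ / p ^ α with hudef
      have hu : p ^ α * u = M₀ := Nat.ordProj_mul_ordCompl_eq_self M₀ p
      have hpu : ¬ p ∣ u := Nat.not_dvd_ordCompl hp hM₀0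
      have hbeq : 2 ^ (ℓ + 1) * h * r * (M : ℤ) = (p : ℤ) ^ α * (2 ^ (ℓ + 1) * h * r * (2 ^ μ * u)) := by
        have : (M : ℤ) = 2 ^ μ * ((p : ℤ) ^ α * u) := by
          rw [hMdec]; push_cast [← hu]; ring
        rw [this]; ring
      rw [hbeq, pow_succ] at hdvd
      have hpα0 : ((p : ℤ)) ^ α ≠ 0 := pow_ne_zero _ (by exact_mod_cast hp.pos.ne')
      have hdvd2 : (p : ℤ) ∣ 2 ^ (ℓ + 1) * h * r * (2 ^ μ * u) :=
        (mul_dvd_mul_iff_left hpα0).mp hdvd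
      rcases hpZ.dvd_mul.mp hdvd2 with h1 | h1
      · rcases hpZ.dvd_mul.mp h1 with h2 | h2
        · rcases hpZ.dvd_mul.mp h2 with h3 | h3
          · exact hpnot2pow _ h3
          · exact hpnh h3
        · exact hpnr h2
      · rcases hpZ.dvd_mul.mp h1 with h2 | h2
        · exact hpnot2pow _ h2
        · have : p ∣ u := by exact_mod_cast h2
          exact hpu this
    exact gaussSum'_eq_zero_of _ _ k hk (p ^ (α + 1)) hqk (by push_cast at hqa ⊢; exact hqa) (by push_cast at hqb ⊢; exact hqb)
  · -- Case 2: 2-adic case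
    have hcond : ϱ + 2 ≤ μ ∧ ℓ + μ + ϱ + 2 ≤ κ := by
      rcases le_total (μ : ℤ) ((κ : ℤ) - ℓ - μ) with h1 | h1 <;>
        [rw [min_eq_left h1] at hϱ; rw [min_eq_right h1] at hϱ] <;> omega
    obtain ⟨hμ, hκ⟩ := hcond
    have hqk : 2 ^ (ℓ + μ + ϱ + 2) ∣ k :=
      (pow_dvd_pow 2 hκ).trans ⟨k₀, hkdec⟩
    have hqa : ((2 : ℤ)) ^ (ℓ + μ + ϱ + 2) ∣ 2 ^ ℓ * h * (M : ℤ) ^ 2 := by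
      have h1 : ((2 : ℤ)) ^ (ℓ + μ + ϱ + 2) ∣ 2 ^ (ℓ + 2 * μ) := pow_dvd_pow 2 (by omega)
      refine h1.trans ⟨h * (M₀ : ℤ) ^ 2, ?_⟩
      rw [hMdec]; push_cast; ring
    have hhodd : ¬ (2 : ℤ) ∣ h := by
      intro hdvd
      have h2k : (2 : ℤ) ∣ (k : ℤ) := by
        have : (2 : ℕ) ∣ k := (dvd_pow_self 2 (by omega : κ ≠ 0)).trans ⟨k₀, hkdec⟩
        exact_mod_cast Int.natCast_dvd_natCast.mpr this
      have : (2 : ℤ) ∣ (Int.gcd h k : ℤ) := Int.dvd_coe_gcd hdvd h2k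
      rw [hhk] at this
      norm_num at this
    have hqb : ¬ ((2 : ℤ)) ^ (ℓ + μ + ϱ + 2) ∣ 2 ^ (ℓ + 1) * h * r * (M : ℤ) := by
      intro hdvd
      have hbeq : 2 ^ (ℓ + 1) * h * r * (M : ℤ) = (2 : ℤ) ^ (ℓ + 1 + ϱ + μ) * (h * r₀ * M₀) := by
        rw [hMdec, hrdec]; push_cast; ring
      have hsplit : ((2 : ℤ)) ^ (ℓ + μ + ϱ + 2) = (2 : ℤ) ^ (ℓ + 1 + ϱ + μ) * 2 := by
        rw [← pow_succ]; congr 1; omega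
      rw [hbeq, hsplit] at hdvd
      have h20 : ((2 : ℤ)) ^ (ℓ + 1 + ϱ + μ) ≠ 0 := pow_ne_zero _ two_ne_zero
      have hdvd2 : (2 : ℤ) ∣ h * r₀ * (M₀ : ℤ) := (mul_dvd_mul_iff_left h20).mp hdvd
      rcases Int.prime_two.dvd_mul.mp hdvd2 with h1 | h1
      · rcases Int.prime_two.dvd_mul.mp h1 with h2 | h2
        · exact hhodd h2
        · rcases hr₀ with ⟨t, ht⟩
          rw [ht] at h2
          omega
      · have : (2 : ℕ) ∣ M₀ := by exact_mod_cast h1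
        rcases hM₀ with ⟨t, ht⟩
        omega
    exact gaussSum'_eq_zero_of _ _ k hk (2 ^ (ℓ + μ + ϱ + 2)) hqk (by push_cast at hqa ⊢; exact hqa) (by push_cast at hqb ⊢; exact hqb)
end
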